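/- Let g: ℂ → ℂ be analytic on an open set with an attracting fixed point x₀ of multiplier μ with 0 < |μ| < 1, and suppose f is a linearizing map, i.e., f(x₀) = 0, f'(x₀) ≠ 0, and f(g(z)) = μ f(z) on a neighborhood of x₀. Then the maximal domain of analytic continuation of f via the relation f(z) = μ⁻ⁿ f(gⁿ(z)) equals the immediate basin of attraction of x₀ under g. -/

import Mathlib

open Filter Set Metric
open scoped Topology

/-- the maximal domain of analytic continuation of a linearizer `f` via the
relation `f z = μ⁻ⁿ f (gⁿ z)` equals the immediate basin of attraction of `x₀` under `g`. -/
theorem linearizer_domain_eq_immediate_basin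
    (g : ℂ → ℂ) (U : Set ℂ) (hU : IsOpen U) (hg : AnalyticOnNhd ℂ g U)
    (x₀ : ℂ) (hx₀ : x₀ ∈ U) (hfix : g x₀ = x₀)
    (μ : ℂ) (hμ : deriv g x₀ = μ) (hμ0 : 0 < ‖μ‖) (hμ1 : ‖μ‖ < 1)
    (f : ℂ → ℂ) (V : Set ℂ) (hV : IsOpen V) (hx₀V : x₀ ∈ V) (hVU : V ⊆ U)
    (hfan : AnalyticOnNhd ℂ f V)
    (hf0 : f x₀ = 0) (hf' : deriv f x₀ = 1)
    (hSchroeder : ∀ z ∈ V, g z ∈ V ∧ f (g z) = μ * f z)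
    -- the basin of attraction of x₀ under g
    (B : Set ℂ)
    (hB : B = {z : ℂ | (∀ n : ℕ, g^[n] z ∈ U) ∧
        Filter.Tendsto (fun n => g^[n] z) Filter.atTop (nhds x₀)})
    -- the maximal domain of continuation via f z = μ⁻ⁿ f (gⁿ z)
    (D : Set ℂ)
    (hD : D = {z : ℂ | ∃ n : ℕ, (∀ k : ℕ, k ≤ n → g^[k] z ∈ U) ∧ g^[n] z ∈ V}) :
    connectedComponentIn D x₀ = connectedComponentIn B x₀ := by
  have hg_cont : ∀ x ∈ U, ContinuousAt g x := fun x hx => (hg x hx).continuousAt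
  have hf_cont : ∀ x ∈ V, ContinuousAt f x := fun x hx => (hfan x hx).continuousAt
  -- iterated Schröder relation
  have horb : ∀ (k : ℕ), ∀ y ∈ V, g^[k] y ∈ V ∧ f (g^[k] y) = μ ^ k * f y := by
    intro k
    induction k with
    | zero => intro y hy; simpa using hy
    | succ k ih =>
      intro y hy
      obtain ⟨h1, h2⟩ := ih y hy
      obtain ⟨h3, h4⟩ := hSchroeder _ h1
      refine ⟨by rw [Function.iterate_succ_apply']; exact h3, ?_⟩
      rw [Function.iterate_succ_apply', h4, h2, pow_succ]
      ring
  -- continuity of iterates along orbits in U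
  have hiter_cont : ∀ (k : ℕ) (z : ℂ), (∀ j, j ≤ k → g^[j] z ∈ U) → ContinuousAt (g^[k]) z := by
    intro k
    induction k with
    | zero => intro z _; simpa using (continuousAt_id : ContinuousAt id z)
    | succ k ih =>
      intro z hz
      rw [Function.iterate_succ']
      exact (hg_cont _ (hz k (Nat.le_succ k))).comp
        (ih z fun j hj => hz j (hj.trans (Nat.le_succ k)))
  -- eventual orbit in U
  have hev : ∀ (n : ℕ) (z : ℂ), (∀ k, k ≤ n → g^[k] z ∈ U) →
      ∀ᶠ y in 𝓝 z, ∀ k, k ≤ n → g^[k] y ∈ U := by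
    intro n
    induction n with
    | zero =>
      intro z hz
      have hzU : z ∈ U := by simpa using hz 0 le_rfl
      filter_upwards [hU.mem_nhds hzU] with y hy k hk
      simpa [Nat.le_zero.mp hk] using hy
    | succ n ih =>
      intro z hz
      have h1 := ih z fun k hk => hz k (hk.trans (Nat.le_succ n))
      have h2 : ∀ᶠ y in 𝓝 z, g^[n+1] y ∈ U :=
        (hiter_cont (n+1) z hz).preimage_mem_nhds (hU.mem_nhds (hz (n+1) le_rfl))
      filter_upwards [h1, h2] with y hy1 hy2 k hk
      rcases eq_or_lt_of_le hk with h | h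
      · rw [h]; exact hy2
      · exact hy1 k (Nat.lt_succ_iff.mp h)
  have hDn_open : ∀ n : ℕ, IsOpen {z : ℂ | (∀ k, k ≤ n → g^[k] z ∈ U) ∧ g^[n] z ∈ V} := by
    intro n
    rw [isOpen_iff_mem_nhds]
    rintro z ⟨hz1, hz2⟩
    have h1 := hev n z hz1
    have h2 : ∀ᶠ y in 𝓝 z, g^[n] y ∈ V :=
      (hiter_cont n z hz1).preimage_mem_nhds (hV.mem_nhds hz2)
    filter_upwards [h1, h2] with y hy1 hy2
    exact ⟨hy1, hy2⟩
  have hD_open : IsOpen D := by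
    rw [hD, isOpen_iff_mem_nhds]
    rintro z ⟨n, hz⟩
    filter_upwards [(hDn_open n).mem_nhds hz] with y hy
    exact ⟨n, hy⟩
  -- orbits of points of D stay in U forever, and eventually in V
  have horbU' : ∀ (n : ℕ) (x : ℂ), (∀ k, k ≤ n → g^[k] x ∈ U) → g^[n] x ∈ V →
      ∀ k, g^[k] x ∈ U := by
    intro n x h1 h2
    have hV' : ∀ k, g^[n + k] x ∈ V := by
      intro k
      have hh := (horb k _ h2).1
      rwa [← Function.iterate_add_apply, Nat.add_comm k n] at hh
    intro k
    rcases le_or_gt k n with h | h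
    · exact h1 k h
    · obtain ⟨m, rfl⟩ := Nat.exists_eq_add_of_le h.le
      exact hVU (hV' m)
  -- local inverse of f at x₀
  have hf_an : AnalyticAt ℂ f x₀ := hfan x₀ hx₀V
  have hstrict : HasStrictDerivAt f (1 : ℂ) x₀ := by
    have h1 := hf_an.hasStrictFDerivAt.hasStrictDerivAt
    rwa [show fderiv ℂ f x₀ 1 = deriv f x₀ from rfl, hf'] at h1
  set h : OpenPartialHomeomorph ℂ ℂ :=
    (hstrict.hasStrictFDerivAt_equiv one_ne_zero).toOpenPartialHomeomorph f with hh
  have hcoe : ⇑h = f := (hstrict.hasStrictFDerivAt_equiv one_ne_zero).toOpenPartialHomeomorph_coe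
  have hx₀src : x₀ ∈ h.source :=
    (hstrict.hasStrictFDerivAt_equiv one_ne_zero).mem_toOpenPartialHomeomorph_source
  -- choose a radius r
  have hpre : {x : ℂ | g x ∈ h.source} ∈ 𝓝 x₀ := by
    apply (hg_cont x₀ hx₀).preimage_mem_nhds
    rw [hfix]
    exact h.open_source.mem_nhds hx₀src
  have hmemn : (h.source ∩ V) ∩ {x : ℂ | g x ∈ h.source} ∈ 𝓝 x₀ :=
    Filter.inter_mem (Filter.inter_mem (h.open_source.mem_nhds hx₀src) (hV.mem_nhds hx₀V)) hpre
  obtain ⟨r, hr0, hrsub⟩ := Metric.nhds_basis_closedBall.mem_iff.mp hmemn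
  have hcball_src : Metric.closedBall x₀ r ⊆ h.source := fun y hy => ((hrsub hy).1).1
  have hball_src : Metric.ball x₀ r ⊆ h.source :=
    fun y hy => hcball_src (Metric.ball_subset_closedBall hy)
  have hcball_V : Metric.closedBall x₀ r ⊆ V := fun y hy => ((hrsub hy).1).2
  have hcball_g : ∀ y ∈ Metric.closedBall x₀ r, g y ∈ h.source := fun y hy => (hrsub hy).2
  -- choose δ
  have himg_open : IsOpen (h '' Metric.ball x₀ r) :=
    h.isOpen_image_of_subset_source Metric.isOpen_ball hball_src
  have h0img : (0 : ℂ) ∈ h '' Metric.ball x₀ r :=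
    ⟨x₀, Metric.mem_ball_self hr0, by rw [hcoe, hf0]⟩
  obtain ⟨δ, hδ0, hδ⟩ := Metric.isOpen_iff.mp himg_open 0 h0img
  set W : Set ℂ := {y : ℂ | y ∈ Metric.ball x₀ r ∧ ‖f y‖ < δ} with hWdef
  have hW_ball : W ⊆ Metric.ball x₀ r := fun y hy => hy.1
  have hW_V : W ⊆ V := fun y hy => hcball_V (Metric.ball_subset_closedBall hy.1)
  have hx₀W : x₀ ∈ W := ⟨Metric.mem_ball_self hr0, by rw [hf0]; simpa using hδ0⟩
  -- key injectivity property
  have hK : ∀ u : ℂ, u ∈ h.source → ‖f u‖ < δ → u ∈ W := by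
    intro u hu hfu
    have hfu' : f u ∈ Metric.ball (0:ℂ) δ := by
      simpa [Metric.mem_ball, dist_zero_right] using hfu
    obtain ⟨v, hv, hveq⟩ := hδ hfu'
    rw [hcoe] at hveq
    have huv : u = v := h.injOn hu (hball_src hv) (by rw [hcoe, hveq])
    exact ⟨by rw [huv]; exact hv, hfu⟩
  have hW_open : IsOpen W := by
    rw [isOpen_iff_mem_nhds]
    rintro y ⟨hy1, hy2⟩
    have h1 : Metric.ball x₀ r ∈ 𝓝 y := Metric.isOpen_ball.mem_nhds hy1
    have hc : ContinuousAt f y := hf_cont y (hW_V ⟨hy1, hy2⟩)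
    have h2 := hc.norm.preimage_mem_nhds (isOpen_Iio.mem_nhds (show ‖f y‖ ∈ Iio δ from hy2))
    filter_upwards [h1, h2] with x hx1 hx2
    exact ⟨hx1, hx2⟩
  -- forward invariance of W
  have hWinv : ∀ y ∈ W, g y ∈ W := by
    rintro y ⟨hy1, hy2⟩
    have hyV : y ∈ V := hW_V ⟨hy1, hy2⟩
    obtain ⟨hgV, hgf⟩ := hSchroeder y hyV
    apply hK
    · exact hcball_g y (Metric.ball_subset_closedBall hy1)
    · rw [hgf, norm_mul]
      calc ‖μ‖ * ‖f y‖ ≤ 1 * ‖f y‖ :=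
            mul_le_mul_of_nonneg_right hμ1.le (norm_nonneg _)
        _ = ‖f y‖ := one_mul _
        _ < δ := hy2
  have hWiter : ∀ (j : ℕ), ∀ y ∈ W, g^[j] y ∈ W := by
    intro j
    induction j with
    | zero => intro y hy; simpa using hy
    | succ j ih =>
      intro y hy
      rw [Function.iterate_succ_apply']
      exact hWinv _ (ih y hy)
  -- convergence on W
  have hW_tendsto : ∀ w ∈ W, Tendsto (fun j : ℕ => g^[j] w) atTop (𝓝 x₀) := by
    intro w hw
    have hkey : ∀ j : ℕ, g^[j] w = h.symm (μ ^ j * f w) := by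
      intro j
      have h1 : g^[j] w ∈ W := hWiter j w hw
      have h2 : f (g^[j] w) = μ ^ j * f w := (horb j w (hW_V hw)).2
      have h3 : g^[j] w ∈ h.source := hball_src h1.1
      calc g^[j] w = h.symm (h (g^[j] w)) := (h.left_inv h3).symm
        _ = h.symm (μ ^ j * f w) := by rw [hcoe, h2]
    have h0t : (0:ℂ) ∈ h.target := by
      have := h.map_source hx₀src
      rwa [hcoe, hf0] at this
    have hsc : ContinuousAt h.symm 0 := h.symm.continuousAt (by rw [h.symm_source]; exact h0t)
    have hlim : Tendsto (fun j : ℕ => μ ^ j * f w) atTop (𝓝 0) := by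
      simpa using (tendsto_pow_atTop_nhds_zero_of_norm_lt_one hμ1).mul_const (f w)
    have hsymm0 : h.symm 0 = x₀ := by
      have := h.left_inv hx₀src
      rwa [hcoe, hf0] at this
    have hcomp := hsc.tendsto.comp hlim
    rw [hsymm0] at hcomp
    exact Tendsto.congr (fun j => (hkey j).symm) hcomp
  -- the clopen-in-D set E
  set E : Set ℂ := {z : ℂ | z ∈ D ∧ ∃ k : ℕ, g^[k] z ∈ W} with hEdef
  have hD_mem : ∀ z ∈ D, ∃ n : ℕ, (∀ k, k ≤ n → g^[k] z ∈ U) ∧ g^[n] z ∈ V := by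
    intro z hz; rwa [hD] at hz
  have hD_orbU : ∀ z ∈ D, ∀ k, g^[k] z ∈ U := by
    intro z hz
    obtain ⟨n, h1, h2⟩ := hD_mem z hz
    exact horbU' n z h1 h2
  have hE_open : IsOpen E := by
    rw [isOpen_iff_mem_nhds]
    rintro z ⟨hzD, k, hk⟩
    have h1 : D ∈ 𝓝 z := hD_open.mem_nhds hzD
    have h2 : ∀ᶠ y in 𝓝 z, g^[k] y ∈ W :=
      (hiter_cont k z fun j _ => hD_orbU z hzD j).preimage_mem_nhds (hW_open.mem_nhds hk)
    filter_upwards [h1, h2] with y hy1 hy2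
    exact ⟨hy1, k, hy2⟩
  have hE_B : E ⊆ B := by
    rintro z ⟨hzD, k, hk⟩
    rw [hB]
    refine ⟨fun n => hD_orbU z hzD n, ?_⟩
    rw [← Filter.tendsto_add_atTop_iff_nat k]
    exact Tendsto.congr (fun j => (Function.iterate_add_apply g j k z).symm)
      (hW_tendsto _ hk)
  -- E is closed in D
  have hmain : ∀ z ∈ D, z ∈ closure E → z ∈ E := by
    intro z hzD hzc
    obtain ⟨n, hzU, hzV⟩ := hD_mem z hzD
    obtain ⟨ρ, hρ0, hρ⟩ := Metric.nhds_basis_closedBall.mem_iff.mp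
      ((hDn_open n).mem_nhds ⟨hzU, hzV⟩)
    have hcont : ContinuousOn (fun x => ‖f (g^[n] x)‖) (Metric.closedBall z ρ) := by
      intro x hx
      obtain ⟨hx1, hx2⟩ := hρ hx
      exact (((hf_cont _ hx2).comp (hiter_cont n x hx1)).norm).continuousWithinAt
    obtain ⟨xm, _, hxm⟩ := (isCompact_closedBall z ρ).exists_isMaxOn
      ⟨z, Metric.mem_closedBall_self hρ0.le⟩ hcont
    set M := ‖f (g^[n] xm)‖ with hMdef
    obtain ⟨k₀, hk₀⟩ : ∃ k₀ : ℕ, ‖μ‖ ^ k₀ * M < δ := by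
      have ht : Tendsto (fun k : ℕ => ‖μ‖ ^ k * M) atTop (𝓝 0) := by
        simpa using (tendsto_pow_atTop_nhds_zero_of_lt_one (norm_nonneg μ) hμ1).mul_const M
      exact (ht.eventually (gt_mem_nhds hδ0)).exists
    obtain ⟨y, hyball, hyE⟩ : ∃ y, y ∈ Metric.ball z ρ ∧ y ∈ E := by
      obtain ⟨y, hy1, hy2⟩ := mem_closure_iff_nhds.mp hzc (Metric.ball z ρ)
        (Metric.ball_mem_nhds z hρ0)
      exact ⟨y, hy1, hy2⟩
    obtain ⟨hyD, k₂, hk₂⟩ := hyE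
    set m := k₀ + k₂ with hmdef
    have hyW : g^[n + m] y ∈ W := by
      have h1 : g^[n + k₀] (g^[k₂] y) ∈ W := hWiter (n + k₀) _ hk₂
      rwa [← Function.iterate_add_apply, Nat.add_assoc] at h1
    set S : Set ℂ := {x : ℂ | x ∈ Metric.ball z ρ ∧ g^[n + m] x ∈ W} with hSdef
    have hballU : ∀ x ∈ Metric.closedBall z ρ, ∀ k, g^[k] x ∈ U := by
      intro x hx
      obtain ⟨hx1, hx2⟩ := hρ hx
      exact horbU' n x hx1 hx2
    have hS_open : IsOpen S := by
      rw [isOpen_iff_mem_nhds]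
      rintro x ⟨hx1, hx2⟩
      have h1 : Metric.ball z ρ ∈ 𝓝 x := Metric.isOpen_ball.mem_nhds hx1
      have h2 : ∀ᶠ x' in 𝓝 x, g^[n + m] x' ∈ W :=
        (hiter_cont (n+m) x fun j _ =>
          hballU x (Metric.ball_subset_closedBall hx1) j).preimage_mem_nhds
          (hW_open.mem_nhds hx2)
      filter_upwards [h1, h2] with x' h1' h2'
      exact ⟨h1', h2'⟩
    have hS_closed : ∀ x ∈ Metric.ball z ρ, x ∈ closure S → x ∈ S := by
      intro x hx hxc
      have hcx : ContinuousAt (g^[n+m]) x :=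
        hiter_cont (n+m) x fun j _ => hballU x (Metric.ball_subset_closedBall hx) j
      have h1 : g^[n+m] x ∈ closure W := by
        have h2 := (hcx.continuousWithinAt).mem_closure_image hxc
        exact closure_mono (by rintro _ ⟨s, hs, rfl⟩; exact hs.2) h2
      have h2 : g^[n+m] x ∈ Metric.closedBall x₀ r :=
        Metric.closure_ball_subset_closedBall (closure_mono hW_ball h1)
      have h3 : ‖f (g^[n+m] x)‖ < δ := by
        have hxV : g^[n] x ∈ V := (hρ (Metric.ball_subset_closedBall hx)).2
        have h4 : f (g^[m] (g^[n] x)) = μ ^ m * f (g^[n] x) := (horb m _ hxV).2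
        have h5 : g^[n+m] x = g^[m] (g^[n] x) := by
          rw [Nat.add_comm]; exact Function.iterate_add_apply g m n x
        rw [h5, h4, norm_mul, norm_pow]
        calc ‖μ‖ ^ m * ‖f (g^[n] x)‖ ≤ ‖μ‖ ^ k₀ * M := by
              apply mul_le_mul
              · exact pow_le_pow_of_le_one (norm_nonneg μ) hμ1.le (Nat.le_add_right k₀ k₂)
              · exact hxm (Metric.ball_subset_closedBall hx)
              · exact norm_nonneg _
              · exact pow_nonneg (norm_nonneg μ) k₀
          _ < δ := hk₀
      exact ⟨hx, hK _ (hcball_src h2) h3⟩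
    have hball_S : Metric.ball z ρ ⊆ S := by
      apply (convex_ball z ρ).isPreconnected.subset_left_of_subset_union hS_open
        isClosed_closure.isOpen_compl
        (disjoint_compl_right.mono_left subset_closure)
      · intro x hx
        by_cases hcx : x ∈ closure S
        · exact Set.mem_union_left _ (hS_closed x hx hcx)
        · exact Set.mem_union_right _ hcx
      · exact ⟨y, hyball, hyball, hyW⟩
    exact ⟨hzD, n + m, (hball_S (Metric.mem_ball_self hρ0)).2⟩
  -- x₀ belongs to everything
  have hx₀D : x₀ ∈ D := by
    rw [hD]
    refine ⟨0, fun k hk => ?_, by simpa using hx₀V⟩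
    rw [Nat.le_zero.mp hk]
    simpa using hx₀
  have hx₀E : x₀ ∈ E := ⟨hx₀D, 0, by simpa using hx₀W⟩
  -- conclusion
  apply Set.Subset.antisymm
  · have hC_pre : IsPreconnected (connectedComponentIn D x₀) := isPreconnected_connectedComponentIn
    have hCE : connectedComponentIn D x₀ ⊆ E := by
      apply hC_pre.subset_left_of_subset_union hE_open isClosed_closure.isOpen_compl
        (disjoint_compl_right.mono_left subset_closure)
      · intro x hx
        by_cases hcx : x ∈ closure E
        · exact Set.mem_union_left _ (hmain x (connectedComponentIn_subset D x₀ hx) hcx)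
        · exact Set.mem_union_right _ hcx
      · exact ⟨x₀, mem_connectedComponentIn hx₀D, hx₀E⟩
    exact hC_pre.subset_connectedComponentIn (mem_connectedComponentIn hx₀D) (hCE.trans hE_B)
  · apply connectedComponentIn_mono
    intro z hz
    rw [hB] at hz
    rw [hD]
    obtain ⟨h1, h2⟩ := hz
    obtain ⟨n, hn⟩ := (h2.eventually (eventually_mem_nhds_iff.mpr (hV.mem_nhds hx₀V))).exists
    exact ⟨n, fun k _ => h1 k, by
      have := hn
      exact mem_of_mem_nhds this⟩
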